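/- Let F be a field and R a subring of F. To each valuation subring A of F associate the function f_A : F → {0, +, −} defined by: f_A(x) = + if x lies in the maximal ideal m_A of A, f_A(x) = 0 if x is a unit of A, and f_A(x) = − if x ∉ A. Then the set S_{F/R} = { f_A : A is a valuation subring of F with R ⊆ A } is a closed subset of the space of all functions F → {0,+,−} equipped with the product topology arising from the discrete topology on the three-element set {0,+,−}; consequently S_{F/R} is compact in this (patch) topology. -/
import Mathlib

/-- The three-element set `{0, +, −}`. -/
inductive Tri : Type
  | zero : Tri
  | plus : Tri
  | minus : Tri
  deriving DecidableEq

instance : TopologicalSpace Tri := ⊥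

instance : DiscreteTopology Tri := ⟨rfl⟩

instance : Fintype Tri :=
  ⟨{Tri.zero, Tri.plus, Tri.minus}, by intro x; cases x <;> simp⟩

open scoped Classical in
/-- The sign function `f_A : F → {0, +, −}` attached to a valuation subring `A` of a
field `F`: it sends `x` to `−` if `x ∉ A`, to `+` if `x` lies in the maximal ideal of `A`
(i.e. `x ∈ A` and `x` is not a unit of `A`), and to `0` if `x` is a unit of `A`. -/
noncomputable def signOf {F : Type*} [Field F] (A : ValuationSubring F) (x : F) : Tri :=
  if hx : x ∈ A then
    (if IsUnit (⟨x, hx⟩ : A) then Tri.zero else Tri.plus)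
  else Tri.minus

namespace TriAux

variable {F : Type*} [Field F]

lemma signOf_ne_minus_iff (A : ValuationSubring F) (x : F) :
    signOf A x ≠ Tri.minus ↔ x ∈ A := by
  unfold signOf
  split_ifs with h h' <;> simp_all

lemma isUnit_iff (A : ValuationSubring F) (x : F) (hx : x ∈ A) :
    IsUnit (⟨x, hx⟩ : A) ↔ x ≠ 0 ∧ x⁻¹ ∈ A := by
  constructor
  · intro h
    obtain ⟨v, hv⟩ := h.exists_right_inv
    have hx1 : x * (v : F) = 1 := by
      have := congrArg Subtype.val hv
      simpa using this
    have hx0 : x ≠ 0 := by intro h0; rw [h0, zero_mul] at hx1; exact one_ne_zero hx1.symm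
    refine ⟨hx0, ?_⟩
    have hvv : x⁻¹ = (v : F) := inv_eq_of_mul_eq_one_right hx1
    rw [hvv]; exact v.2
  · rintro ⟨hx0, hinv⟩
    exact ⟨⟨⟨x, hx⟩, ⟨x⁻¹, hinv⟩, by ext; simp [mul_inv_cancel₀ hx0],
      by ext; simp [inv_mul_cancel₀ hx0]⟩, rfl⟩

lemma signOf_eq_zero_iff (A : ValuationSubring F) (x : F) :
    signOf A x = Tri.zero ↔ (x ∈ A ∧ x ≠ 0 ∧ x⁻¹ ∈ A) := by
  unfold signOf
  split_ifs with h h'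
  · simp only [true_iff]
    exact ⟨h, (isUnit_iff A x h).1 h'⟩
  · constructor
    · intro hc; exact absurd hc (by simp)
    · rintro ⟨_, h0, hi⟩; exact absurd ((isUnit_iff A x h).2 ⟨h0, hi⟩) h'
  · constructor
    · intro hc; exact absurd hc (by simp)
    · rintro ⟨hx, _⟩; exact absurd hx h

omit [Field F] in
/-- Any pointwise condition on three coordinates is closed. -/
lemma isClosed_cond3 (x y z : F) (p : Tri → Tri → Tri → Prop) :
    IsClosed {f : F → Tri | p (f x) (f y) (f z)} := by
  have hcont : Continuous fun f : F → Tri => ((f x, f y, f z) : Tri × Tri × Tri) :=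
    (continuous_apply x).prodMk ((continuous_apply y).prodMk (continuous_apply z))
  have : {f : F → Tri | p (f x) (f y) (f z)} =
      (fun f : F → Tri => ((f x, f y, f z) : Tri × Tri × Tri)) ⁻¹'
        {t : Tri × Tri × Tri | p t.1 t.2.1 t.2.2} := rfl
  rw [this]
  exact (isClosed_discrete _).preimage hcont

end TriAux

/-- For a field `F` and a subring `R` of `F`, the set
`S_{F/R} = {f_A : A a valuation subring of F containing R}` of sign functions is a closed,
hence compact, subset of the space of all functions `F → {0, +, −}` with the product
(patch) topology coming from the discrete topology on `{0, +, −}`. -/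
theorem riemannZariski_patch_closed_compact
    {F : Type*} [Field F] (R : Subring F) :
    IsClosed {f : F → Tri | ∃ A : ValuationSubring F, R ≤ A.toSubring ∧ f = signOf A} ∧
    IsCompact {f : F → Tri | ∃ A : ValuationSubring F, R ≤ A.toSubring ∧ f = signOf A} := by
  open TriAux in
  have hset : {f : F → Tri | ∃ A : ValuationSubring F, R ≤ A.toSubring ∧ f = signOf A} =
      (⋂ (x : F) (y : F), {f : F → Tri |
        f x ≠ Tri.minus → f y ≠ Tri.minus → f (x + y) ≠ Tri.minus}) ∩
      (⋂ (x : F) (y : F), {f : F → Tri |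
        f x ≠ Tri.minus → f y ≠ Tri.minus → f (x * y) ≠ Tri.minus}) ∩
      (⋂ (x : F), {f : F → Tri | f x ≠ Tri.minus → f (-x) ≠ Tri.minus}) ∩
      (⋂ (x : F), {f : F → Tri | f x ≠ Tri.minus ∨ f x⁻¹ ≠ Tri.minus}) ∩
      (⋂ (r : R), {f : F → Tri | f (r : F) ≠ Tri.minus}) ∩
      (⋂ (x : F), {f : F → Tri |
        f x = Tri.zero ↔ (f x ≠ Tri.minus ∧ x ≠ 0 ∧ f x⁻¹ ≠ Tri.minus)}) := by
    ext f
    simp only [Set.mem_setOf_eq, Set.mem_inter_iff, Set.mem_iInter]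
    constructor
    · rintro ⟨A, hRA, rfl⟩
      refine ⟨⟨⟨⟨⟨?_, ?_⟩, ?_⟩, ?_⟩, ?_⟩, ?_⟩
      · intro x y hx hy
        rw [signOf_ne_minus_iff] at hx hy ⊢
        exact A.add_mem _ _ hx hy
      · intro x y hx hy
        rw [signOf_ne_minus_iff] at hx hy ⊢
        exact A.mul_mem _ _ hx hy
      · intro x hx
        rw [signOf_ne_minus_iff] at hx ⊢
        exact A.neg_mem _ hx
      · intro x
        rcases eq_or_ne x 0 with rfl | hx0
        · left; rw [signOf_ne_minus_iff]; exact A.zero_mem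
        · rcases A.mem_or_inv_mem x with h | h
          · left; rwa [signOf_ne_minus_iff]
          · right; rwa [signOf_ne_minus_iff]
      · intro r
        rw [signOf_ne_minus_iff]
        exact hRA r.2
      · intro x
        rw [signOf_eq_zero_iff, signOf_ne_minus_iff, signOf_ne_minus_iff]
    · rintro ⟨⟨⟨⟨⟨hadd, hmul⟩, hneg⟩, hinv⟩, hR⟩, hzero⟩
      have h1 : f (1 : F) ≠ Tri.minus := hR ⟨1, R.one_mem⟩
      have h0 : f (0 : F) ≠ Tri.minus := hR ⟨0, R.zero_mem⟩
      let A : ValuationSubring F :=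
        { carrier := {x | f x ≠ Tri.minus}
          mul_mem' := fun ha hb => hmul _ _ ha hb
          one_mem' := h1
          add_mem' := fun ha hb => hadd _ _ ha hb
          zero_mem' := h0
          neg_mem' := fun ha => hneg _ ha
          mem_or_inv_mem' := fun x => hinv x }
      have hmemA : ∀ y : F, y ∈ A ↔ f y ≠ Tri.minus := fun _ => Iff.rfl
      refine ⟨A, fun r hr => hR ⟨r, hr⟩, ?_⟩
      funext x
      cases hx : f x with
      | minus =>
        symm
        unfold signOf
        rw [dif_neg]
        intro hc
        exact (hmemA x).1 hc hx
      | zero =>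
        obtain ⟨hne, h0', hi⟩ := (hzero x).1 hx
        symm
        rw [signOf_eq_zero_iff]
        exact ⟨(hmemA x).2 hne, h0', (hmemA _).2 hi⟩
      | plus =>
        symm
        unfold signOf
        split_ifs with h h'
        · exfalso
          obtain ⟨h0', hi⟩ := (isUnit_iff A x h).1 h'
          have := (hzero x).2 ⟨(hmemA x).1 h, h0', (hmemA _).1 hi⟩
          rw [hx] at this
          cases this
        · rfl
        · exact absurd ((hmemA x).2 (by simp [hx])) h
  have hclosed : IsClosed
      {f : F → Tri | ∃ A : ValuationSubring F, R ≤ A.toSubring ∧ f = signOf A} := by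
    rw [hset]
    refine (((((IsClosed.inter ?_ ?_).inter ?_).inter ?_).inter ?_).inter ?_)
    · exact isClosed_iInter fun x => isClosed_iInter fun y =>
        isClosed_cond3 x y (x + y) (fun a b c => a ≠ Tri.minus → b ≠ Tri.minus → c ≠ Tri.minus)
    · exact isClosed_iInter fun x => isClosed_iInter fun y =>
        isClosed_cond3 x y (x * y) (fun a b c => a ≠ Tri.minus → b ≠ Tri.minus → c ≠ Tri.minus)
    · exact isClosed_iInter fun x =>
        isClosed_cond3 x (-x) (-x) (fun a b _ => a ≠ Tri.minus → b ≠ Tri.minus)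
    · exact isClosed_iInter fun x =>
        isClosed_cond3 x x⁻¹ x⁻¹ (fun a b _ => a ≠ Tri.minus ∨ b ≠ Tri.minus)
    · exact isClosed_iInter fun r =>
        isClosed_cond3 (r : F) (r : F) (r : F) (fun a _ _ => a ≠ Tri.minus)
    · exact isClosed_iInter fun x =>
        isClosed_cond3 x x⁻¹ x (fun a b _ =>
          a = Tri.zero ↔ (a ≠ Tri.minus ∧ x ≠ 0 ∧ b ≠ Tri.minus))
  exact ⟨hclosed, hclosed.isCompact⟩
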